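/- Let N ⊂ M be a finite index II₁ subfactor with basis B = {b} (so Σ_b b e₁ b* = 1). For x ∈ N′ ∩ M_k and elements y₁,…,y_{k+1} ∈ M, the rotation ρ_k(x) = Σ_b R_{b*}(L_{b*})* x satisfies ⟨ρ_k(x), y₁ ⊗_N ⋯ ⊗_N y_{k+1}⟩ = ⟨x, y_{k+1} ⊗_N y₁ ⊗_N ⋯ ⊗_N y_k⟩, where the inner product is in L²(M_k, tr). -/

import Mathlib

/-!
STATEMENT 7: Let N ⊂ M be a finite index II₁ subfactor with basis B = {b}
(so Σ_b b e₁ b* = 1).  For x ∈ N′ ∩ M_k and y₁,…,y_{k+1} ∈ M, the rotation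
ρ_k(x) = Σ_b R_{b*}(L_{b*})* x satisfies
   ⟨ρ_k(x), y₁ ⊗_N ⋯ ⊗_N y_{k+1}⟩ = ⟨x, y_{k+1} ⊗_N y₁ ⊗_N ⋯ ⊗_N y_k⟩
in L²(M_k, tr).

Model: A is the II₁ factor M (a complex star algebra), N ⊆ A the subfactor,
E : A → A the trace-preserving conditional expectation onto N (E = E_N);
K = L²(M_k) ≅ ⊗_N^{k+1} L²(M) with multi-tensor map t, K' = L²(M_{k-1}) with t';
L a, R a : K' → K are the creation operators â⊗· and ·⊗â; lK, rK (resp. ract)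
are the left/right multiplication actions of A on K (resp. K'); the finite basis
B : Fin n → A satisfies the completeness relation Σ_b b E(b* m) ⊗ ζ = m ⊗ ζ.
-/

open ContinuousLinearMap
open scoped ENNReal

theorem rotation_inner_product_identity
    (A : Type) [Ring A] [StarRing A]
    (N : Set A) (E : A → A) (hE_mem : ∀ a, E a ∈ N)
    (hE_star : ∀ a, star (E a) = E (star a))
    (k n : ℕ)
    (K : Type) [NormedAddCommGroup K] [InnerProductSpace ℂ K] [CompleteSpace K]
    (K' : Type) [NormedAddCommGroup K'] [InnerProductSpace ℂ K'] [CompleteSpace K']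
    (t : (Fin (k + 1) → A) → K) (t' : (Fin k → A) → K')
    (L R : A → (K' →L[ℂ] K))
    (lact ract : A → (K' →L[ℂ] K'))
    (lK rK : A → (K →L[ℂ] K))
    -- creation operators: L_a ξ = â ⊗_N ξ, R_a ξ = ξ ⊗_N â
    (hL : ∀ (a : A) (y : Fin k → A), L a (t' y) = t (Fin.cons a y))
    (hR : ∀ (a : A) (y : Fin k → A), R a (t' y) = t (Fin.snoc y a))
    -- adjoints: (L_a)* (b̂ ⊗ η) = E(a* b) η, (R_a)* (η ⊗ b̂) = η E(b a*)
    (hLadj : ∀ (a b : A) (y : Fin k → A),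
      ContinuousLinearMap.adjoint (L a) (t (Fin.cons b y)) = lact (E (star a * b)) (t' y))
    (hRadj : ∀ (a : A) (y : Fin (k + 1) → A),
      ContinuousLinearMap.adjoint (R a) (t y)
        = ract (E (y (Fin.last k) * star a)) (t' (Fin.init y)))
    -- compatibility of the actions with the tensor maps:
    (hLr : ∀ (a m : A) (ξ : K'), L a (ract m ξ) = rK m (L a ξ))
    (hlKt : ∀ (m : A) (y : Fin (k + 1) → A),
      lK m (t y) = t (Function.update y 0 (m * y 0)))
    (hrKt : ∀ (m : A) (y : Fin (k + 1) → A),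
      rK m (t y) = t (Function.update y (Fin.last k) (y (Fin.last k) * m)))
    (hlKadj : ∀ a : A, ContinuousLinearMap.adjoint (lK a) = lK (star a))
    (hrKadj : ∀ a : A, ContinuousLinearMap.adjoint (rK a) = rK (star a))
    -- the basis B for M over N: Σ_b b E(b* m) = m, at the level of tensors
    (B : Fin n → A)
    (hbasis : ∀ (m : A) (w : Fin k → A),
      (∑ i, t (Fin.cons (E (m * B i) * star (B i)) w)) = t (Fin.cons m w))
    -- x an N-central vector (x ∈ N' ∩ M_k ⊆ L²(M_k)):
    (x : K) (hx : ∀ a ∈ N, lK a x = rK a x) :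
    ∀ y : Fin (k + 1) → A,
      (inner ℂ (∑ i, R (star (B i)) (ContinuousLinearMap.adjoint (L (star (B i))) x))
        (t y) : ℂ)
      = inner ℂ x (t fun j => y (j - 1)) := by
  intro y
  have step : ∀ i : Fin n,
      (inner ℂ (R (star (B i)) (ContinuousLinearMap.adjoint (L (star (B i))) x)) (t y) : ℂ)
        = inner ℂ x (t (Fin.cons (E (y (Fin.last k) * B i) * star (B i)) (Fin.init y))) := by
    intro i
    rw [← ContinuousLinearMap.adjoint_inner_right, hRadj, star_star,
      ContinuousLinearMap.adjoint_inner_left, hLr, hL,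
      ← ContinuousLinearMap.adjoint_inner_left (rK _), hrKadj,
      hE_star, ← hx _ (hE_mem _), ← hE_star, ← hlKadj,
      ContinuousLinearMap.adjoint_inner_left, hlKt, Fin.update_cons_zero]
    simp
  calc (inner ℂ (∑ i, R (star (B i)) (ContinuousLinearMap.adjoint (L (star (B i))) x))
        (t y) : ℂ)
      = ∑ i, (inner ℂ (R (star (B i)) (ContinuousLinearMap.adjoint (L (star (B i))) x)) (t y) : ℂ) := by
        rw [sum_inner]
    _ = ∑ i, (inner ℂ x (t (Fin.cons (E (y (Fin.last k) * B i) * star (B i)) (Fin.init y))) : ℂ) := by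
        simp only [step]
    _ = inner ℂ x (∑ i, t (Fin.cons (E (y (Fin.last k) * B i) * star (B i)) (Fin.init y))) := by
        rw [inner_sum]
    _ = inner ℂ x (t (Fin.cons (y (Fin.last k)) (Fin.init y))) := by rw [hbasis]
    _ = inner ℂ x (t fun j => y (j - 1)) := by
        congr 1
        apply congrArg
        funext j
        refine Fin.cases ?_ ?_ j
        · have h0 : (0 - 1 : Fin (k + 1)) = Fin.last k := by
            ext
            simp [Fin.sub_def, Fin.last]
          simp [h0]
        · intro i
          have h1 : (i.succ - 1 : Fin (k + 1)) = i.castSucc := by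
            have hi : (i : ℕ) < k := i.isLt
            have h1m : 1 % (k + 1) = 1 := Nat.mod_eq_of_lt (by omega)
            ext
            rw [Fin.sub_def]
            simp [Fin.val_succ, h1m]
            rw [show k + ((i : ℕ) + 1) = (i : ℕ) + (k + 1) by omega,
              Nat.add_mod_right]
            exact Nat.mod_eq_of_lt (by omega)
          simp [h1, Fin.init]
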